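/- Let m ≥ 1, let φ ∈ B_j be a propositional function over variables x_1,…,x_j, set n = j + m, and define f_t ∈ B_{n,m} by its components ψ_i(x_1,…,x_{j+m}) = x_{j+i} ∧ φ(x_1,…,x_j) for i = 1,…,m. Then φ is valid (φ(x) = 1 for all x ∈ 𝔹^j) if and only if μ(f_t) = 2^j, equivalently if and only if ℓ(f_t) = j = n − m. -/

import Mathlib

/-- `μ(f)`: the number of occurrences of the most frequent output pattern of
`f : 𝔹^n → 𝔹^m`. -/
def mu {n m : ℕ} (f : (Fin n → Bool) → (Fin m → Bool)) : ℕ :=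
  Finset.univ.sup fun y : Fin m → Bool =>
    (Finset.univ.filter fun x : Fin n → Bool => f x = y).card

/-- `ℓ(f) = ⌈log₂ μ(f)⌉`. -/
def ell {n m : ℕ} (f : (Fin n → Bool) → (Fin m → Bool)) : ℕ :=
  Nat.clog 2 (mu f)

/-- The function `f_t ∈ B_{j+m,m}` with components
`ψ_i(x_1,…,x_{j+m}) = x_{j+i} ∧ φ(x_1,…,x_j)` for `i = 1,…,m`. -/
def ft (j m : ℕ) (φ : (Fin j → Bool) → Bool) :
    (Fin (j + m) → Bool) → (Fin m → Bool) :=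
  fun x i => x (Fin.natAdd j i) && φ (fun a => x (Fin.castAdd m a))

lemma count_fiber (j m : ℕ) (φ : (Fin j → Bool) → Bool) (y : Fin m → Bool) :
    (Finset.univ.filter fun x : Fin (j+m) → Bool => ft j m φ x = y).card
      = ∑ a : Fin j → Bool,
          (if φ a = true then 1 else if y = (fun _ => false) then 2^m else 0) := by
  classical
  rw [← Fintype.card_subtype]
  let E : (Fin (j+m) → Bool) ≃ (Fin j → Bool) × (Fin m → Bool) :=
    (Equiv.arrowCongr finSumFinEquiv.symm (Equiv.refl Bool)).trans
      (Equiv.sumArrowEquivProdArrow _ _ _)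
  have key : ∀ x : Fin (j+m) → Bool,
      ft j m φ x = y ↔ (fun i => (E x).2 i && φ (E x).1) = y := by
    intro x
    have h1 : (E x).1 = fun a => x (Fin.castAdd m a) := by
      funext a
      simp [E, Equiv.sumArrowEquivProdArrow, Equiv.arrowCongr]
    have h2 : (E x).2 = fun i => x (Fin.natAdd j i) := by
      funext i
      simp [E, Equiv.sumArrowEquivProdArrow, Equiv.arrowCongr]
    rw [h1, h2]
    rfl
  have e1 : {x : Fin (j+m) → Bool // ft j m φ x = y} ≃
      {p : (Fin j → Bool) × (Fin m → Bool) // (fun i => p.2 i && φ p.1) = y} :=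
    (Equiv.subtypeEquiv E (by intro x; exact key x))
  rw [Fintype.card_congr e1]
  have e2 : {p : (Fin j → Bool) × (Fin m → Bool) // (fun i => p.2 i && φ p.1) = y} ≃
      Σ a : Fin j → Bool, {b : Fin m → Bool // (fun i : Fin m => b i && φ a) = y} :=
    Equiv.subtypeProdEquivSigmaSubtype (fun (a : Fin j → Bool) (b : Fin m → Bool) => (fun i : Fin m => b i && φ a) = y)
  rw [Fintype.card_congr e2, Fintype.card_sigma]
  refine Finset.sum_congr rfl fun a _ => ?_
  by_cases h : φ a = true
  · simp only [h, if_true, Bool.and_true]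
    have : ∀ b : Fin m → Bool, ((fun i => b i) = y) ↔ b = y := by intro b; rfl
    simp only [this]
    exact Fintype.card_subtype_eq y
  · have h' : φ a = false := by simpa using h
    simp only [h, if_false, h', Bool.and_false]
    by_cases hy : y = (fun _ => false)
    · subst hy
      rw [if_pos rfl, Fintype.card_congr (Equiv.subtypeUnivEquiv fun _ => rfl)]
      simp [Fintype.card_fun]
    · rw [if_neg hy]
      exact Fintype.card_eq_zero_iff.mpr ⟨fun b => hy b.2.symm⟩

lemma mu_valid (j m : ℕ) (φ : (Fin j → Bool) → Bool)
    (hv : ∀ x : Fin j → Bool, φ x = true) : mu (ft j m φ) = 2 ^ j := by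
  unfold mu
  have hN : ∀ y : Fin m → Bool,
      (Finset.univ.filter fun x : Fin (j+m) → Bool => ft j m φ x = y).card = 2 ^ j := by
    intro y
    rw [count_fiber j m φ y]
    simp [hv, Finset.card_univ, Fintype.card_fun]
  rw [Finset.sup_congr rfl (fun y _ => hN y)]
  exact Finset.sup_const Finset.univ_nonempty _

lemma mu_gt (j m : ℕ) (hm : 1 ≤ m) (φ : (Fin j → Bool) → Bool)
    (hnv : ¬ ∀ x : Fin j → Bool, φ x = true) : 2 ^ j < mu (ft j m φ) := by
  push_neg at hnv
  obtain ⟨a₀, ha₀⟩ := hnv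
  have key : 2 ^ j <
      (Finset.univ.filter fun x : Fin (j+m) → Bool =>
        ft j m φ x = fun _ => false).card := by
    rw [count_fiber j m φ (fun _ => false)]
    have h1 : (2:ℕ) ^ j = ∑ _a : Fin j → Bool, 1 := by
      simp [Finset.card_univ, Fintype.card_fun]
    rw [h1]
    apply Finset.sum_lt_sum
    · intro a _
      by_cases hφa : φ a = true
      · simp [hφa]
      · simp only [hφa, if_false, if_pos rfl]
        exact Nat.one_le_two_pow
    · refine ⟨a₀, Finset.mem_univ _, ?_⟩
      simp only [ha₀, if_false, if_pos rfl]
      exact Nat.one_lt_two_pow_iff.mpr (by omega)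
  refine lt_of_lt_of_le key ?_
  exact Finset.le_sup (f := fun y : Fin m → Bool =>
    (Finset.univ.filter fun x : Fin (j+m) → Bool => ft j m φ x = y).card)
    (Finset.mem_univ (fun _ => false))

theorem valid_iff_mu_eq_two_pow
    (j m : ℕ) (hm : 1 ≤ m) (φ : (Fin j → Bool) → Bool) :
    ((∀ x : Fin j → Bool, φ x = true) ↔ mu (ft j m φ) = 2 ^ j) ∧
    ((∀ x : Fin j → Bool, φ x = true) ↔ ell (ft j m φ) = j) := by
  constructor
  · constructor
    · exact mu_valid j m φ
    · intro hmu
      by_contra hnv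
      exact absurd hmu (Nat.ne_of_gt (mu_gt j m hm φ hnv))
  · constructor
    · intro hv
      unfold ell
      rw [mu_valid j m φ hv]
      exact Nat.clog_pow 2 j (by norm_num)
    · intro hell
      by_contra hnv
      have h1 : 2 ^ j < mu (ft j m φ) := mu_gt j m hm φ hnv
      have h2 : j < Nat.clog 2 (mu (ft j m φ)) :=
        (Nat.lt_clog_iff_pow_lt (by norm_num)).mpr h1
      unfold ell at hell
      omega
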